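/- For every integer q ≥ 2 and every real α > 0, the sequence q^n · (1/q − 2α/(q√n) − 2/(qn))^(n/2 − α√n) · (1/q + 2α/(q√n) + 2/(qn))^(n/2 + α√n), where the powers are real-exponent powers and n ranges over natural numbers large enough that 1/q − 2α/(q√n) − 2/(qn) > 0, converges as n → ∞ to e^(2α²). -/

import Mathlib

open Filter Real Topology

private lemma sqrtNat_atTop : Filter.Tendsto (fun n : ℕ => Real.sqrt n) atTop atTop := by
  have := (tendsto_rpow_atTop (by norm_num : (0:ℝ) < 1/2)).comp
    (tendsto_natCast_atTop_atTop (R := ℝ))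
  refine this.congr fun n => ?_
  simp [Real.sqrt_eq_rpow, Function.comp]

set_option maxHeartbeats 1000000

/-- For every integer `q ≥ 2` and every `α > 0`,
`q^n · (1/q - 2α/(q√n) - 2/(qn))^(n/2 - α√n) · (1/q + 2α/(q√n) + 2/(qn))^(n/2 + α√n)`
(real-exponent powers) converges to `e^(2α²)` as `n → ∞`. -/
theorem tendsto_qary_interval_length_ratio (q : ℕ) (hq : 2 ≤ q) (α : ℝ) (hα : 0 < α) :
    Filter.Tendsto (fun n : ℕ =>
      (q : ℝ) ^ (n : ℝ) *
        (1 / q - 2 * α / (q * Real.sqrt n) - 2 / (q * n)) ^ ((n : ℝ) / 2 - α * Real.sqrt n) *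
        (1 / q + 2 * α / (q * Real.sqrt n) + 2 / (q * n)) ^ ((n : ℝ) / 2 + α * Real.sqrt n))
      Filter.atTop (nhds (Real.exp (2 * α ^ 2))) := by
  have hq0 : (0:ℝ) < q := by
    have : (2:ℝ) ≤ q := by exact_mod_cast hq
    linarith
  set x : ℕ → ℝ := fun n => 2 * α / Real.sqrt n + 2 / n with hxdef
  set L : ℕ → ℝ := fun n => ((n:ℝ)/2 - α * Real.sqrt n) * Real.log (1 - x n)
      + ((n:ℝ)/2 + α * Real.sqrt n) * Real.log (1 + x n) with hLdef
  set C : ℝ := 2 * α + 2 with hCdef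
  have hC : 0 < C := by positivity
  -- the bound  C/√n → 0
  have hC0 : Tendsto (fun n : ℕ => C / Real.sqrt n) atTop (𝓝 0) :=
    Tendsto.div_atTop tendsto_const_nhds sqrtNat_atTop
  -- eventual basic facts
  have hEv : ∀ᶠ n : ℕ in atTop, 0 < Real.sqrt n ∧ Real.sqrt n * Real.sqrt n = n ∧
      0 < x n ∧ x n ≤ C / Real.sqrt n ∧ x n < 1/2 ∧ 2 * α ≤ Real.sqrt n := by
    have h1 : ∀ᶠ n : ℕ in atTop, C / Real.sqrt n < 1/2 :=
      hC0.eventually (eventually_lt_nhds (by norm_num : (0:ℝ) < 1/2))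
    have h2 : ∀ᶠ n : ℕ in atTop, 2 * α ≤ Real.sqrt n := sqrtNat_atTop.eventually_ge_atTop _
    filter_upwards [h1, h2, eventually_ge_atTop 1] with n h1 h2 hn1
    have hn0 : (0:ℝ) < n := by exact_mod_cast hn1
    have hs0 : 0 < Real.sqrt n := Real.sqrt_pos.2 hn0
    have hss : Real.sqrt n * Real.sqrt n = n := Real.mul_self_sqrt hn0.le
    have hsle : Real.sqrt n ≤ n := by
      nlinarith [Real.sqrt_nonneg (n:ℝ), Real.one_le_sqrt.2 (by exact_mod_cast hn1 : (1:ℝ) ≤ n)]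
    have hxpos : 0 < x n := by
      have : 0 < 2 * α / Real.sqrt n := by positivity
      have : 0 < 2 / (n:ℝ) := by positivity
      simp only [hxdef]; positivity
    have hxle : x n ≤ C / Real.sqrt n := by
      simp only [hxdef, hCdef]
      have h2n : 2 / (n:ℝ) ≤ 2 / Real.sqrt n := by
        apply div_le_div_of_nonneg_left (by norm_num) hs0 hsle
      have : 2 * α / Real.sqrt n + 2 / (n:ℝ) ≤ 2 * α / Real.sqrt n + 2 / Real.sqrt n := by
        linarith
      calc 2 * α / Real.sqrt n + 2 / (n:ℝ) ≤ 2 * α / Real.sqrt n + 2 / Real.sqrt n := this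
        _ = (2 * α + 2) / Real.sqrt n := by ring
    exact ⟨hs0, hss, hxpos, hxle, lt_of_le_of_lt hxle h1, h2⟩
  -- error bound for log expansions
  have hlog : ∀ y : ℝ, 0 < y → y < 1/2 →
      |Real.log (1 - y) + (y + y^2/2)| ≤ 2 * y^3 ∧
      |Real.log (1 + y) - (y - y^2/2)| ≤ 2 * y^3 := by
    intro y hy0 hy2
    have hy1 : |y| < 1 := by rw [abs_of_pos hy0]; linarith
    have hy1' : |(-y)| < 1 := by rwa [abs_neg]
    have h1 := Real.abs_log_sub_add_sum_range_le hy1 2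
    have h2 := Real.abs_log_sub_add_sum_range_le hy1' 2
    simp only [Finset.sum_range_succ, Finset.sum_range_zero, abs_neg, abs_of_pos hy0] at h1 h2
    have hden : 1 - y ≥ 1/2 := by linarith
    have hb : y^3 / (1 - y) ≤ 2 * y^3 := by
      rw [div_le_iff₀ (by linarith)]
      nlinarith [pow_pos hy0 3]
    constructor
    · refine le_trans (le_of_le_of_eq (le_trans (le_of_eq ?_) h1) (by ring_nf)) hb
      congr 1; push_cast; ring
    · refine le_trans (le_of_le_of_eq (le_trans (le_of_eq ?_) h2) (by ring_nf)) hb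
      have : (1 : ℝ) - -y = 1 + y := by ring
      rw [this]; congr 1; push_cast; ring
  -- L n is close to 2α² - 2/n
  have hLlim : Tendsto L atTop (𝓝 (2 * α ^ 2)) := by
    have hmain : Tendsto (fun n : ℕ => 2 * α ^ 2 - 2 / (n:ℝ)) atTop (𝓝 (2 * α ^ 2)) := by
      have := Tendsto.div_atTop (tendsto_const_nhds (x := (2:ℝ)))
        (tendsto_natCast_atTop_atTop (R := ℝ))
      simpa using (tendsto_const_nhds (x := 2 * α ^ 2)).sub this
    have hE : Tendsto (fun n : ℕ => L n - (2 * α ^ 2 - 2 / (n:ℝ))) atTop (𝓝 0) := by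
      apply squeeze_zero_norm' (a := fun n : ℕ => 2 * C^3 / Real.sqrt n)
      · filter_upwards [hEv] with n ⟨hs0, hss, hxp, hxle, hxhalf, hαs⟩
        set s := Real.sqrt n with hsdef
        have hn0 : (0:ℝ) < n := by nlinarith
        -- main-term identity
        have hmain_eq : ((n:ℝ)/2 - α * s) * (-(x n + (x n)^2/2))
            + ((n:ℝ)/2 + α * s) * (x n - (x n)^2/2) = 2 * α ^ 2 - 2 / (n:ℝ) := by
          have hxval : x n = 2 * α / s + 2 / (n:ℝ) := rfl
          rw [hxval, ← hss]
          have hs := hs0.ne'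
          field_simp
          ring
        have hsplit : L n - (2 * α ^ 2 - 2 / (n:ℝ)) =
            ((n:ℝ)/2 - α * s) * (Real.log (1 - x n) + (x n + (x n)^2/2))
            + ((n:ℝ)/2 + α * s) * (Real.log (1 + x n) - (x n - (x n)^2/2)) := by
          rw [← hmain_eq]; simp only [hLdef]; ring
        obtain ⟨hb1, hb2⟩ := hlog (x n) hxp hxhalf
        have ha1 : (0:ℝ) ≤ (n:ℝ)/2 - α * s := by nlinarith
        have ha2 : (0:ℝ) ≤ (n:ℝ)/2 + α * s := by nlinarith
        have hx3 : (x n)^3 ≤ (C/s)^3 := by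
          apply pow_le_pow_left₀ hxp.le hxle
        have hEb : |L n - (2 * α ^ 2 - 2 / (n:ℝ))| ≤ (n:ℝ) * (2 * (x n)^3) := by
          rw [hsplit]
          calc |_ + _| ≤ ((n:ℝ)/2 - α * s) * |Real.log (1 - x n) + (x n + (x n)^2/2)|
                + ((n:ℝ)/2 + α * s) * |Real.log (1 + x n) - (x n - (x n)^2/2)| := by
                refine (abs_add_le _ _).trans ?_
                rw [abs_mul, abs_mul, abs_of_nonneg ha1, abs_of_nonneg ha2]
            _ ≤ ((n:ℝ)/2 - α * s) * (2 * (x n)^3) + ((n:ℝ)/2 + α * s) * (2 * (x n)^3) := by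
                gcongr
            _ = (n:ℝ) * (2 * (x n)^3) := by ring
        rw [Real.norm_eq_abs]
        refine hEb.trans ?_
        have : (n:ℝ) * (2 * (x n)^3) ≤ (n:ℝ) * (2 * (C/s)^3) := by
          gcongr
        refine this.trans (le_of_eq ?_)
        rw [div_pow]
        have hs3 : s^3 = s * (n:ℝ) := by rw [pow_succ, sq, hss]; ring
        field_simp [hs3]
        ring
        rw [sq, hss]
      · have := Tendsto.div_atTop (tendsto_const_nhds (x := 2 * C^3)) sqrtNat_atTop
        exact this
    have : (fun n : ℕ => (2 * α ^ 2 - 2 / (n:ℝ)) + (L n - (2 * α ^ 2 - 2 / (n:ℝ)))) = L := by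
      funext n; ring
    simpa [this] using hmain.add hE
  -- the original function eventually equals exp (L n)
  have heq : ∀ᶠ n : ℕ in atTop, (q : ℝ) ^ (n : ℝ) *
        (1 / q - 2 * α / (q * Real.sqrt n) - 2 / (q * n)) ^ ((n : ℝ) / 2 - α * Real.sqrt n) *
        (1 / q + 2 * α / (q * Real.sqrt n) + 2 / (q * n)) ^ ((n : ℝ) / 2 + α * Real.sqrt n)
        = Real.exp (L n) := by
    filter_upwards [hEv] with n ⟨hs0, hss, hxp, hxle, hxhalf, hαs⟩
    set s := Real.sqrt n with hsdef
    have hn0 : (0:ℝ) < n := by nlinarith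
    have hb1 : 1 / (q:ℝ) - 2 * α / (q * s) - 2 / (q * n) = (1 - x n) / q := by
      have hxval : x n = 2 * α / s + 2 / (n:ℝ) := rfl
      rw [hxval]; field_simp; ring
    have hb2 : 1 / (q:ℝ) + 2 * α / (q * s) + 2 / (q * n) = (1 + x n) / q := by
      have hxval : x n = 2 * α / s + 2 / (n:ℝ) := rfl
      rw [hxval]; field_simp; ring
    have h1m : (0:ℝ) < 1 - x n := sub_pos.2 (hxhalf.trans (by norm_num))
    have h1p : (0:ℝ) < 1 + x n := by linarith
    rw [hb1, hb2,
      Real.rpow_def_of_pos hq0,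
      Real.rpow_def_of_pos (by positivity : (0:ℝ) < (1 - x n)/q),
      Real.rpow_def_of_pos (by positivity : (0:ℝ) < (1 + x n)/q),
      ← Real.exp_add, ← Real.exp_add]
    congr 1
    rw [Real.log_div h1m.ne' hq0.ne', Real.log_div h1p.ne' hq0.ne']
    simp only [hLdef]
    ring
  have hexp : Tendsto (fun n : ℕ => Real.exp (L n)) atTop (𝓝 (Real.exp (2 * α ^ 2))) :=
    (Real.continuous_exp.tendsto _).comp hLlim
  exact hexp.congr' (heq.mono fun n h => h.symm)
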